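/- Let A be an n×n integral matrix, p a prime, and φ(x) a monic irreducible factor over F_p of the mod-p reduction of the characteristic polynomial of A. Then ord_p(det φ(A)) ≥ deg φ(x), where φ(A) is the integer matrix formed from the lift of φ to ℤ[x] with coefficients in {0,1,…,p−1}. -/

import Mathlib

open Polynomial Matrix BigOperators

/-- The lift of a polynomial over F_p to ℤ[x], with all coefficients in {0, 1, …, p-1}. -/
noncomputable def liftZ (p : ℕ) (f : Polynomial (ZMod p)) : Polynomial ℤ :=
  ∑ i ∈ Finset.range (f.natDegree + 1), Polynomial.C ((f.coeff i).val : ℤ) * Polynomial.X ^ i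

/-- ord_p(m) = max{k : p^k ∣ m} for m ≠ 0, and ord_p(0) = ∞. -/
noncomputable def ordP (p : ℕ) (m : ℤ) : ℕ∞ :=
  if m = 0 then ⊤ else (padicValInt p m : ℕ∞)

section Aux

lemma liftZ_map (p : ℕ) [NeZero p] (φ : Polynomial (ZMod p)) :
    (liftZ p φ).map (Int.castRingHom (ZMod p)) = φ := by
  conv_rhs => rw [φ.as_sum_range' (φ.natDegree+1) (lt_add_one _)]
  rw [liftZ, Polynomial.map_sum]
  refine Finset.sum_congr rfl fun i _ => ?_
  rw [Polynomial.map_mul, Polynomial.map_pow, Polynomial.map_C, Polynomial.map_X]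
  simp [Int.cast_natCast, ZMod.natCast_val, ZMod.cast_id, Polynomial.C_mul_X_pow_eq_monomial]

lemma aeval_liftZ_map {n : ℕ} (p : ℕ) [NeZero p] (A : Matrix (Fin n) (Fin n) ℤ)
    (φ : Polynomial (ZMod p)) :
    (Polynomial.aeval A (liftZ p φ)).map (Int.cast : ℤ → ZMod p)
      = Polynomial.aeval (A.map (Int.cast : ℤ → ZMod p)) φ := by
  have h := Polynomial.map_aeval_eq_aeval_map
    (φ := Int.castRingHom (ZMod p))
    (ψ := ((Int.castRingHom (ZMod p)).mapMatrix :
      Matrix (Fin n) (Fin n) ℤ →+* Matrix (Fin n) (Fin n) (ZMod p)))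
    (Subsingleton.elim _ _) (liftZ p φ) A
  rw [liftZ_map] at h
  exact h

variable {K : Type*} [Field K] {m : ℕ}

lemma eval_charpoly' (M : Matrix (Fin m) (Fin m) K) (β : K) :
    M.charpoly.eval β = (β • (1 : Matrix (Fin m) (Fin m) K) - M).det := by
  rw [Matrix.charpoly, ← Polynomial.coe_evalRingHom, RingHom.map_det]
  congr 1
  ext i j
  by_cases h : i = j <;>
    simp [h, Matrix.charmatrix_apply, Matrix.map_apply, Matrix.one_apply,
      Matrix.diagonal_apply, Matrix.sub_apply, Matrix.smul_apply]

lemma map_aeval_matrix {F : Type*} [Field F] (c : K →+* F) (M : Matrix (Fin m) (Fin m) K)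
    (f : K[X]) :
    (Polynomial.aeval M f).map c = Polynomial.aeval (M.map c) (f.map c) := by
  exact Polynomial.map_aeval_eq_aeval_map (φ := c)
    (ψ := (c.mapMatrix : Matrix (Fin m) (Fin m) K →+* Matrix (Fin m) (Fin m) F))
    (by ext a : 1
        simp only [RingHom.comp_apply, RingHom.mapMatrix_apply]
        rw [Matrix.algebraMap_eq_diagonal, Matrix.algebraMap_eq_diagonal,
          Matrix.diagonal_map (by simp)]
        simp) f M

lemma det_aeval_zero (M : Matrix (Fin m) (Fin m) K) (φ : K[X]) (hirr : Irreducible φ)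
    (hdvd : φ ∣ M.charpoly) : (Polynomial.aeval M φ).det = 0 := by
  set F := AlgebraicClosure K
  let c : K →+* F := algebraMap K F
  have hinj : Function.Injective c := c.injective
  have key : (Polynomial.aeval (M.map c) (φ.map c)).det = 0 := by
    obtain ⟨β, hβ⟩ := IsAlgClosed.exists_root (φ.map c)
      (by simpa using (Polynomial.degree_pos_of_irreducible hirr).ne')
    obtain ⟨ψ, hψ⟩ := (Polynomial.dvd_iff_isRoot.mpr hβ : (X - C β) ∣ φ.map c)
    have hroot : ((M.map c).charpoly).eval β = 0 := by
      have : φ.map c ∣ (M.map c).charpoly := by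
        rw [Matrix.charpoly_map]
        exact Polynomial.map_dvd c hdvd
      have h2 : (X - C β) ∣ (M.map c).charpoly := dvd_trans ⟨ψ, hψ⟩ this
      exact (Polynomial.dvd_iff_isRoot.mp h2)
    have hdet : (M.map c - β • 1).det = 0 := by
      have h1 : (β • (1 : Matrix (Fin m) (Fin m) F) - M.map c).det = 0 := by
        rw [← eval_charpoly']; exact hroot
      have : M.map c - β • 1 = -(β • 1 - M.map c) := (neg_sub _ _).symm
      rw [this, Matrix.det_neg, h1, mul_zero]
    rw [hψ, _root_.map_mul, Matrix.det_mul]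
    have : Polynomial.aeval (M.map c) (X - C β) = M.map c - β • 1 := by
      simp [Polynomial.aeval_X, sub_eq_add_neg, Algebra.algebraMap_eq_smul_one]
    rw [this, hdet, zero_mul]
  have : c (Polynomial.aeval M φ).det = 0 := by
    rw [RingHom.map_det, RingHom.mapMatrix_apply, map_aeval_matrix, key]
  exact hinj (by simpa using this)

lemma sum_mulVec {ι : Type*} (s : Finset ι) (f : ι → Matrix (Fin m) (Fin m) K) (v : Fin m → K) :
    (∑ i ∈ s, f i) *ᵥ v = ∑ i ∈ s, (f i) *ᵥ v :=
  map_sum (AddMonoidHom.mk' (fun M : Matrix (Fin m) (Fin m) K => M *ᵥ v)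
    (fun a b => Matrix.add_mulVec a b v)) f s

lemma aeval_mulVec_ker (M : Matrix (Fin m) (Fin m) K) (φ : K[X]) (v : Fin m → K)
    (hker : (Polynomial.aeval M φ) *ᵥ v = 0) (q : K[X]) :
    (Polynomial.aeval M (q * φ)) *ᵥ v = 0 := by
  rw [_root_.map_mul, ← Matrix.mulVec_mulVec, hker, Matrix.mulVec_zero]

lemma lin_indep_ker (M : Matrix (Fin m) (Fin m) K) (φ : K[X]) (hirr : Irreducible φ)
    (v : Fin m → K) (hv : v ≠ 0) (hker : (Polynomial.aeval M φ) *ᵥ v = 0) :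
    LinearIndependent K (fun j : Fin φ.natDegree => (M ^ (j : ℕ)) *ᵥ v) := by
  have hd : 0 < φ.natDegree := hirr.natDegree_pos
  rw [Fintype.linearIndependent_iff]
  intro g hg
  by_contra hex
  push_neg at hex
  obtain ⟨i0, hi0⟩ := hex
  set q : K[X] := ∑ i : Fin φ.natDegree, Polynomial.C (g i) * Polynomial.X ^ (i : ℕ) with hq
  have hq0 : q ≠ 0 := by
    intro h
    apply hi0
    have := congrArg (fun r => Polynomial.coeff r (i0 : ℕ)) h
    simp only [hq, Polynomial.finset_sum_coeff, Polynomial.coeff_C_mul_X_pow] at this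
    rwa [Finset.sum_eq_single i0 (fun b _ hb => by
        rw [if_neg (fun h => hb (Fin.val_injective h.symm))]) (by simp),
      if_pos rfl, Polynomial.coeff_zero] at this
  have hdeg : q.degree < φ.degree := by
    have h1 : q.degree < (φ.natDegree : ℕ) := by
      refine lt_of_le_of_lt (Polynomial.degree_sum_le _ _) ?_
      rw [Finset.sup_lt_iff (by exact_mod_cast WithBot.bot_lt_coe _)]
      intro i _
      refine lt_of_le_of_lt (Polynomial.degree_C_mul_X_pow_le _ _) ?_
      exact_mod_cast i.isLt
    rwa [Polynomial.degree_eq_natDegree hirr.ne_zero]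
  have hndvd : ¬ φ ∣ q := fun hdvd => hq0 (Polynomial.eq_zero_of_dvd_of_degree_lt hdvd hdeg)
  obtain ⟨a, b, hab⟩ := (hirr.coprime_iff_not_dvd.mpr hndvd)
  have haq : (Polynomial.aeval M q) *ᵥ v = 0 := by
    have : (Polynomial.aeval M q) = ∑ i : Fin φ.natDegree, g i • M ^ (i : ℕ) := by
      rw [hq, map_sum]
      refine Finset.sum_congr rfl fun i _ => ?_
      rw [_root_.map_mul, Polynomial.aeval_C, map_pow, Polynomial.aeval_X,
        Algebra.smul_def]
    rw [this, _root_.sum_mulVec]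
    simpa [Matrix.smul_mulVec] using hg
  apply hv
  have h1 : (Polynomial.aeval M (a * φ + b * q)) *ᵥ v = v := by
    rw [hab, _root_.map_one, Matrix.one_mulVec]
  rw [map_add, Matrix.add_mulVec, aeval_mulVec_ker M φ v hker a,
    _root_.map_mul, ← Matrix.mulVec_mulVec, haq, Matrix.mulVec_zero, add_zero] at h1
  exact h1.symm

lemma sumExtend_inl {K V : Type*} [Field K] [AddCommGroup V] [Module K V] {d : ℕ}
    {w : Fin d → V} (li : LinearIndependent K w) (i : Fin d) :
    Module.Basis.sumExtend li (Sum.inl i) = w i := by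
  haveI := Classical.decPred (· ∈ Set.range w)
  simp only [Module.Basis.sumExtend, Module.Basis.reindex_apply, Equiv.symm_symm, Equiv.trans_apply,
    Equiv.sumCongr_apply, Sum.map_inl, Equiv.Set.sumDiffSubset_apply_inl,
    Module.Basis.extend_apply_self]
  erw [Equiv.Set.sumDiffSubset_apply_inl
    (li.linearIndepOn_id.subset_extend (Set.subset_univ _))]
  simp

lemma pow_dvd_det {n : ℕ} (p : ℕ) (hp : p.Prime) (M : Matrix (Fin n) (Fin n) ℤ) (d : ℕ)
    (w : Fin d → (Fin n → ZMod p)) (li : LinearIndependent (ZMod p) w)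
    (hker : ∀ j, (M.map (Int.cast : ℤ → ZMod p)) *ᵥ w j = 0) :
    (p : ℤ) ^ d ∣ M.det := by
  haveI := Fact.mk hp
  set b := Module.Basis.sumExtend li with hb
  haveI : Fintype ↑(Module.Basis.sumExtendIndex li) := Fintype.ofFinite _
  have hcard : Fintype.card (Fin d ⊕ (Module.Basis.sumExtendIndex li)) = n := by
    rw [← Module.finrank_eq_card_basis b]
    simp
  let e : (Fin d ⊕ (Module.Basis.sumExtendIndex li)) ≃ Fin n := Fintype.equivFinOfCardEq hcard
  let b' : Module.Basis (Fin n) (ZMod p) (Fin n → ZMod p) := b.reindex e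
  let Bb : Matrix (Fin n) (Fin n) (ZMod p) := (Pi.basisFun (ZMod p) (Fin n)).toMatrix b'
  have hBdet : Bb.det ≠ 0 := by
    letI := Module.Basis.invertibleToMatrix (Pi.basisFun (ZMod p) (Fin n)) b'
    exact (Matrix.isUnit_det_of_invertible Bb).ne_zero
  let B : Matrix (Fin n) (Fin n) ℤ := Matrix.of fun i j => ((Bb i j).val : ℤ)
  have hBmap : B.map (Int.cast : ℤ → ZMod p) = Bb := by
    ext i j
    simp [B, Matrix.map_apply, ZMod.natCast_val, ZMod.cast_id]
  have hcol : ∀ j : Fin n, ∀ x : Fin d, e.symm j = Sum.inl x →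
      ∀ i, (p : ℤ) ∣ (M * B) i j := by
    intro j x hx i
    rw [← ZMod.intCast_zmod_eq_zero_iff_dvd]
    have h1 : ((M * B) i j : ZMod p) = ((M * B).map (Int.cast : ℤ → ZMod p)) i j := rfl
    have hmul : (M * B).map (Int.cast : ℤ → ZMod p)
        = M.map (Int.cast : ℤ → ZMod p) * B.map (Int.cast : ℤ → ZMod p) := by
      exact Matrix.map_mul (f := Int.castRingHom (ZMod p))
    rw [h1, hmul, hBmap]
    have h2 : (fun k => Bb k j) = w x := by
      funext k
      show (Pi.basisFun (ZMod p) (Fin n)).toMatrix b' k j = w x k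
      rw [Module.Basis.toMatrix_apply]
      have : b' j = w x := by rw [Module.Basis.reindex_apply, hx, sumExtend_inl]
      simp [this, Pi.basisFun_repr]
    have h3 : (M.map (Int.cast : ℤ → ZMod p) * Bb) i j
        = ((M.map (Int.cast : ℤ → ZMod p)) *ᵥ (fun k => Bb k j)) i := by
      simp [Matrix.mul_apply, Matrix.mulVec, dotProduct]
    rw [h3, h2, hker x]
    rfl
  classical
  let c : Fin n → ℤ := fun j => if (e.symm j).isLeft then (p : ℤ) else 1
  let N : Matrix (Fin n) (Fin n) ℤ :=
    Matrix.of fun i j => if (e.symm j).isLeft then (M * B) i j / p else (M * B) i j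
  have hMB : M * B = N * Matrix.diagonal c := by
    ext i j
    rw [Matrix.mul_diagonal]
    rcases he : e.symm j with x | x
    · have : (e.symm j).isLeft = true := by rw [he]; rfl
      simp only [N, c, Matrix.of_apply, this, if_pos rfl]
      exact (Int.ediv_mul_cancel (hcol j x he i)).symm
    · have : (e.symm j).isLeft = false := by rw [he]; rfl
      simp [N, c, this]
  have hprod : ∏ j, c j = (p : ℤ) ^ d := by
    have h1 : ∏ j, c j = ∏ s : Fin d ⊕ (Module.Basis.sumExtendIndex li),
        (if s.isLeft then (p : ℤ) else 1) := by
      rw [← Equiv.prod_comp e.symm (fun s => if s.isLeft then (p : ℤ) else 1)]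
    rw [h1, Fintype.prod_sum_type]
    simp
  have hdet : M.det * B.det = N.det * (p : ℤ) ^ d := by
    rw [← Matrix.det_mul, hMB, Matrix.det_mul, Matrix.det_diagonal, hprod]
  have hdvd2 : (p : ℤ) ^ d ∣ M.det * B.det := ⟨N.det, by rw [hdet, mul_comm]⟩
  have hpB : ¬ (p : ℤ) ∣ B.det := by
    rw [← ZMod.intCast_zmod_eq_zero_iff_dvd]
    have : ((B.det : ℤ) : ZMod p) = Bb.det := by
      rw [← hBmap]
      exact (RingHom.map_det (Int.castRingHom (ZMod p)) B).trans rfl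
    rw [this]
    exact hBdet
  exact (Int.prime_iff_natAbs_prime.mpr (by simpa using hp)).pow_dvd_of_dvd_mul_right
    d hpB hdvd2

end Aux

/-- **Lemma.** If φ is a monic irreducible factor over F_p of the mod-p reduction of the
characteristic polynomial of the integral matrix A, then ord_p(det φ(A)) ≥ deg φ,
where φ(A) is formed from the lift of φ to ℤ[x] with coefficients in {0,…,p-1}. -/
theorem ordP_det_ge_deg {n : ℕ} (p : ℕ) (hp : p.Prime) (A : Matrix (Fin n) (Fin n) ℤ)
    (φ : Polynomial (ZMod p)) (hmon : φ.Monic) (hirr : Irreducible φ)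
    (hdvd : φ ∣ (A.map (Int.cast : ℤ → ZMod p)).charpoly) :
    (φ.natDegree : ℕ∞) ≤ ordP p (Polynomial.aeval A (liftZ p φ)).det := by
  haveI := Fact.mk hp
  set Abar := A.map (Int.cast : ℤ → ZMod p) with hAbar
  set M := Polynomial.aeval A (liftZ p φ) with hM
  have hMmap : M.map (Int.cast : ℤ → ZMod p) = Polynomial.aeval Abar φ :=
    aeval_liftZ_map p A φ
  -- a nonzero kernel vector over F_p
  have h0 : (Polynomial.aeval Abar φ).det = 0 := det_aeval_zero Abar φ hirr hdvd
  obtain ⟨v, hv, hker⟩ := (Matrix.exists_mulVec_eq_zero_iff).mpr h0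
  -- the linearly independent family in the kernel
  set d := φ.natDegree with hd
  set w : Fin d → (Fin n → ZMod p) := fun j => (Abar ^ (j : ℕ)) *ᵥ v with hw
  have li : LinearIndependent (ZMod p) w := lin_indep_ker Abar φ hirr v hv hker
  have hkerw : ∀ j, (M.map (Int.cast : ℤ → ZMod p)) *ᵥ w j = 0 := by
    intro j
    rw [hMmap, hw]
    have hcomm : (Polynomial.aeval Abar φ) * Abar ^ (j : ℕ)
        = Abar ^ (j : ℕ) * (Polynomial.aeval Abar φ) := by
      have hx : Abar ^ (j : ℕ) = Polynomial.aeval Abar ((Polynomial.X : (ZMod p)[X]) ^ (j : ℕ)) := by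
        rw [map_pow, Polynomial.aeval_X]
      rw [hx, ← _root_.map_mul, ← _root_.map_mul, mul_comm φ]
    rw [Matrix.mulVec_mulVec, hcomm, ← Matrix.mulVec_mulVec, hker, Matrix.mulVec_zero]
  have hdvd2 : (p : ℤ) ^ d ∣ M.det := pow_dvd_det p hp M d w li hkerw
  rw [ordP]
  by_cases hz : M.det = 0
  · rw [if_pos hz]
    exact le_top
  · rw [if_neg hz]
    have := (padicValInt_dvd_iff (p := p) d M.det).mp hdvd2
    rcases this with h | h
    · exact absurd h hz
    · exact_mod_cast h
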